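/- Let T be a triangulation of a convex m-gon (m ≥ 4) and let a ≺ b ≺ c ≺ d be four cyclically ordered vertices. Then T contains either an arc xy with a ≺ b ≼ x ≺ c ≺ d ≼ y, or an arc xy with a ≼ x ≺ b ≺ c ≼ y ≺ d. -/

import Mathlib

namespace CyclicTri

variable {m : ℕ}

/-- Position of `v` relative to base point `a` in the cyclic order on `ZMod m`. -/
def pos (a v : ZMod m) : ℕ := (v - a).val

/-- `a ≺ b ≺ c` in the cyclic order. -/
def Cyc3 (a b c : ZMod m) : Prop := 0 < pos a b ∧ pos a b < pos a c

/-- `a ≺ b ≺ c ≺ d` in the cyclic order. -/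
def Cyc4 (a b c d : ZMod m) : Prop :=
  0 < pos a b ∧ pos a b < pos a c ∧ pos a c < pos a d

/-- The arcs `xy` and `x'y'` cross: their endpoints interleave cyclically. -/
def Cross (x y x' y' : ZMod m) : Prop := Cyc4 x x' y y' ∨ Cyc4 x' x y' y

/-- `xy` is a diagonal of the polygon: the endpoints are distinct and non-adjacent. -/
def Diag (x y : ZMod m) : Prop := x ≠ y ∧ y ≠ x + 1 ∧ x ≠ y + 1

/-- `A` is (the symmetrised set of arcs of) a triangulation of the convex `m`-gon:
a maximal set of pairwise non-crossing diagonals. -/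
def IsTriangulation (A : Set (ZMod m × ZMod m)) : Prop :=
  (∀ x y, (x, y) ∈ A → (y, x) ∈ A) ∧
  (∀ x y, (x, y) ∈ A → Diag x y) ∧
  (∀ x y x' y', (x, y) ∈ A → (x', y') ∈ A → ¬ Cross x y x' y') ∧
  (∀ x y, Diag x y → (∀ x' y', (x', y') ∈ A → ¬ Cross x y x' y') → (x, y) ∈ A)

/-- There is an arc `xy` of `A` with `a ≺ b ≼ x ≺ c ≺ d ≼ y` (the `+1` case of `χ_T`). -/
def PosCase (A : Set (ZMod m × ZMod m)) (a b c d : ZMod m) : Prop :=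
  ∃ x y, (x, y) ∈ A ∧ 0 < pos a b ∧ pos a b ≤ pos a x ∧ pos a x < pos a c ∧
    pos a c < pos a d ∧ pos a d ≤ pos a y

/-- There is an arc `xy` of `A` with `a ≼ x ≺ b ≺ c ≼ y ≺ d` (the `-1` case of `χ_T`). -/
def NegCase (A : Set (ZMod m × ZMod m)) (a b c d : ZMod m) : Prop :=
  ∃ x y, (x, y) ∈ A ∧ pos a x < pos a b ∧ pos a b < pos a c ∧ pos a c ≤ pos a y ∧
    pos a y < pos a d

open Classical in
/-- The chirotope `χ_T` on cyclically ordered tuples `a ≺ b ≺ c ≺ d`. -/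
noncomputable def chiCyc (A : Set (ZMod m × ZMod m)) (a b c d : ZMod m) : ℤ :=
  if PosCase A a b c d then 1 else if NegCase A a b c d then -1 else 0


section Helpers
set_option linter.unusedSectionVars false
variable [NeZero m]

lemma pos_lt (o v : ZMod m) : pos o v < m := ZMod.val_lt _

lemma pos_self (o : ZMod m) : pos o o = 0 := by simp [pos]

lemma cast_pos (o v : ZMod m) : ((pos o v : ℕ) : ZMod m) = v - o :=
  ZMod.natCast_rightInverse _

lemma pos_key (o x t : ZMod m) : pos x t = (pos o t + m - pos o x) % m := by
  have hle : pos o x ≤ pos o t + m := le_trans (pos_lt o x).le (by omega)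
  have h1 : t - x = ((pos o t + m - pos o x : ℕ) : ZMod m) := by
    rw [Nat.cast_sub hle]
    push_cast [cast_pos]
    rw [ZMod.natCast_self]
    ring
  rw [pos, h1, ZMod.val_natCast]

lemma pos_trans (o x t : ZMod m) (h : pos o x ≤ pos o t) :
    pos x t = pos o t - pos o x := by
  have hk := pos_key o x t
  have h1 : pos o t < m := pos_lt o t
  have h2 : pos o t + m - pos o x = (pos o t - pos o x) + m := by omega
  rw [hk, h2, Nat.add_mod_right, Nat.mod_eq_of_lt (by omega)]

lemma pos_trans' (o x t : ZMod m) (h : pos o t < pos o x) :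
    pos x t = pos o t + m - pos o x := by
  have hk := pos_key o x t
  have h1 : pos o x < m := pos_lt o x
  rw [hk, Nat.mod_eq_of_lt (by omega)]

lemma pos_add_one (o v : ZMod m) : pos o (v + 1) = (pos o v + 1) % m := by
  have h1 : v + 1 - o = ((pos o v + 1 : ℕ) : ZMod m) := by
    push_cast [cast_pos]; ring
  rw [pos, h1, ZMod.val_natCast]

lemma mk_diag {o x y : ZMod m} (h0 : 0 < pos o x) (h1 : pos o x + 1 < pos o y) :
    Diag x y := by
  have hy : pos o y < m := pos_lt o y
  refine ⟨fun e => ?_, fun e => ?_, fun e => ?_⟩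
  · rw [e] at h1; omega
  · have := pos_add_one o x
    rw [← e, Nat.mod_eq_of_lt (by omega)] at this
    omega
  · have := pos_add_one o y
    rw [← e] at this
    rcases Nat.lt_or_ge (pos o y + 1) m with hlt | hge
    · rw [Nat.mod_eq_of_lt hlt] at this; omega
    · have hym : pos o y + 1 = m := by omega
      rw [hym, Nat.mod_self] at this; omega

lemma mk_diag' {o x y : ZMod m} (h1 : pos o x + 1 < pos o y) (h2 : pos o y + 1 < m) :
    Diag x y := by
  refine ⟨fun e => ?_, fun e => ?_, fun e => ?_⟩
  · rw [e] at h1; omega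
  · have := pos_add_one o x
    rw [← e, Nat.mod_eq_of_lt (by omega)] at this
    omega
  · have := pos_add_one o y
    rw [← e, Nat.mod_eq_of_lt (by omega)] at this
    omega

lemma cyc4_rotate {x y z w : ZMod m} (h : Cyc4 x y z w) : Cyc4 y z w x := by
  obtain ⟨h1, h2, h3⟩ := h
  have hw : pos x w < m := pos_lt x w
  have e1 : pos y z = pos x z - pos x y := pos_trans x y z (by omega)
  have e2 : pos y w = pos x w - pos x y := pos_trans x y w (by omega)
  have e3 : pos y x = pos x x + m - pos x y := pos_trans' x y x (by rw [pos_self]; omega)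
  rw [pos_self] at e3
  exact ⟨by omega, by omega, by omega⟩

lemma mk_cross {o t1 t2 t3 t4 : ZMod m} (h1 : pos o t1 < pos o t2)
    (h2 : pos o t2 < pos o t3) (h3 : pos o t3 < pos o t4) :
    Cross t1 t3 t2 t4 := by
  left
  have e1 : pos t1 t2 = pos o t2 - pos o t1 := pos_trans o t1 t2 (by omega)
  have e2 : pos t1 t3 = pos o t3 - pos o t1 := pos_trans o t1 t3 (by omega)
  have e3 : pos t1 t4 = pos o t4 - pos o t1 := pos_trans o t1 t4 (by omega)
  exact ⟨by omega, by omega, by omega⟩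

lemma crossD {o s t u v : ZMod m} (hst : pos o s < pos o t) (h : Cross s t u v) :
    (pos o s < pos o u ∧ pos o u < pos o t ∧ (pos o v < pos o s ∨ pos o t < pos o v)) ∨
    (pos o s < pos o v ∧ pos o v < pos o t ∧ (pos o u < pos o s ∨ pos o t < pos o u)) := by
  have key : ∀ u v : ZMod m, Cyc4 s u t v →
      pos o s < pos o u ∧ pos o u < pos o t ∧ (pos o v < pos o s ∨ pos o t < pos o v) := by
    intro u v ⟨h1, h2, h3⟩
    have hm1 : pos o t < m := pos_lt o t
    have est : pos s t = pos o t - pos o s := pos_trans o s t (by omega)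
    have hu : pos o s < pos o u ∧ pos o u < pos o t := by
      rcases le_or_gt (pos o s) (pos o u) with hc | hc
      · have := pos_trans o s u hc; omega
      · have := pos_trans' o s u hc
        have := pos_lt o u
        omega
    refine ⟨hu.1, hu.2, ?_⟩
    rcases le_or_gt (pos o s) (pos o v) with hc | hc
    · have := pos_trans o s v hc; right; omega
    · left; omega
  rcases h with h | h
  · exact Or.inl (key u v h)
  · exact Or.inr (key v u (cyc4_rotate h))

lemma exists_max_arc (S : Set (ZMod m × ZMod m)) (f : ZMod m × ZMod m → ℕ)
    (hne : S.Nonempty) : ∃ p ∈ S, ∀ p' ∈ S, f p' ≤ f p := by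
  obtain ⟨p, hp, hmax⟩ := Set.Finite.exists_maximalFor f S (Set.toFinite S) hne
  refine ⟨p, hp, fun p' hp' => ?_⟩
  by_contra hlt
  push_neg at hlt
  exact absurd (hmax hp' hlt.le) (by omega)

lemma exists_min_arc (S : Set (ZMod m × ZMod m)) (f : ZMod m × ZMod m → ℕ)
    (hne : S.Nonempty) : ∃ p ∈ S, ∀ p' ∈ S, f p ≤ f p' := by
  obtain ⟨p, hp, hmin⟩ := Set.Finite.exists_minimalFor f S (Set.toFinite S) hne
  refine ⟨p, hp, fun p' hp' => ?_⟩
  by_contra hlt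
  push_neg at hlt
  exact absurd (hmin hp' hlt.le) (by omega)

lemma exists_max_left (P : ZMod m → ZMod m → Prop) (f : ZMod m → ℕ)
    (hne : ∃ x y, P x y) : ∃ x y, P x y ∧ ∀ x' y', P x' y' → f x' ≤ f x := by
  obtain ⟨p, hp, hmax⟩ := exists_max_arc {q | P q.1 q.2} (fun q => f q.1)
    (by obtain ⟨x, y, hxy⟩ := hne; exact ⟨(x, y), hxy⟩)
  exact ⟨p.1, p.2, hp, fun x' y' h' => hmax (x', y') h'⟩

lemma exists_max_right (P : ZMod m → ZMod m → Prop) (f : ZMod m → ℕ)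
    (hne : ∃ x y, P x y) : ∃ x y, P x y ∧ ∀ x' y', P x' y' → f y' ≤ f y := by
  obtain ⟨p, hp, hmax⟩ := exists_max_arc {q | P q.1 q.2} (fun q => f q.2)
    (by obtain ⟨x, y, hxy⟩ := hne; exact ⟨(x, y), hxy⟩)
  exact ⟨p.1, p.2, hp, fun x' y' h' => hmax (x', y') h'⟩

lemma exists_min_left (P : ZMod m → ZMod m → Prop) (f : ZMod m → ℕ)
    (hne : ∃ x y, P x y) : ∃ x y, P x y ∧ ∀ x' y', P x' y' → f x ≤ f x' := by
  obtain ⟨p, hp, hmin⟩ := exists_min_arc {q | P q.1 q.2} (fun q => f q.1)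
    (by obtain ⟨x, y, hxy⟩ := hne; exact ⟨(x, y), hxy⟩)
  exact ⟨p.1, p.2, hp, fun x' y' h' => hmin (x', y') h'⟩

end Helpers

end CyclicTri

set_option linter.unusedSectionVars false in
open CyclicTri in
/-- A triangulation `T` of a convex `m`-gon (`m ≥ 4`) contains either an arc `xy`
with `a ≺ b ≼ x ≺ c ≺ d ≼ y` or an arc `xy` with `a ≼ x ≺ b ≺ c ≼ y ≺ d`. -/
theorem stmt_1 (m : ℕ) (hm : 4 ≤ m) (A : Set (ZMod m × ZMod m))
    (hT : IsTriangulation A) (a b c d : ZMod m) (h : Cyc4 a b c d) :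
    PosCase A a b c d ∨ NegCase A a b c d := by
  by_contra hcon
  push_neg at hcon
  obtain ⟨hnP, hnN⟩ := hcon
  haveI : NeZero m := ⟨by omega⟩
  obtain ⟨hab, hbc, hcd⟩ := h
  have hdm : pos a d < m := pos_lt a d
  have ha0 : pos a a = 0 := pos_self a
  have hP : ∀ x y, (x, y) ∈ A → pos a b ≤ pos a x → pos a x < pos a c →
      pos a d ≤ pos a y → False := fun x y hxy h1 h2 h3 =>
    hnP ⟨x, y, hxy, hab, h1, h2, hcd, h3⟩
  have hN : ∀ x y, (x, y) ∈ A → pos a x < pos a b → pos a c ≤ pos a y →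
      pos a y < pos a d → False := fun x y hxy h1 h2 h3 =>
    hnN ⟨x, y, hxy, h1, hbc, h2, h3⟩
  have getC : ∀ s t : ZMod m, Diag s t → pos a s < pos a t → ((s, t) ∈ A → False) →
      ∃ u v, (u, v) ∈ A ∧ pos a s < pos a u ∧ pos a u < pos a t ∧
        (pos a v < pos a s ∨ pos a t < pos a v) := by
    intro s t hd hst hno
    have hnall : ¬ ∀ x' y', (x', y') ∈ A → ¬ Cross s t x' y' :=
      fun hall => hno (hT.2.2.2 s t hd hall)
    push_neg at hnall
    obtain ⟨u, v, huv, hcr⟩ := hnall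
    rcases crossD hst hcr with ⟨h1, h2, h3⟩ | ⟨h1, h2, h3⟩
    · exact ⟨u, v, huv, h1, h2, h3⟩
    · exact ⟨v, u, hT.1 u v huv, h1, h2, h3⟩
  have NC : ∀ u v x y : ZMod m, (u, v) ∈ A → (x, y) ∈ A → pos a u < pos a x →
      pos a x < pos a v → pos a v < pos a y → False := fun u v x y h1 h2 ha' hb' hc' =>
    hT.2.2.1 u v x y h1 h2 (mk_cross ha' hb' hc')
  -- step 1: a crossing arc for the chord (b, d)
  obtain ⟨u0, v0, hu0, h01, h02, h03⟩ := getC b d (mk_diag hab (by omega)) (by omega)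
    (fun hmem => hP b d hmem le_rfl hbc le_rfl)
  have hBD : (∃ x y, (x, y) ∈ A ∧ pos a b < pos a x ∧ pos a x < pos a c ∧ pos a y < pos a b)
      ∨ (∃ x y, (x, y) ∈ A ∧ pos a c ≤ pos a x ∧ pos a x < pos a d ∧ pos a d < pos a y) := by
    rcases lt_or_ge (pos a u0) (pos a c) with hc1 | hc1
    · rcases h03 with h03 | h03
      · exact Or.inl ⟨u0, v0, hu0, h01, hc1, by omega⟩
      · exact (hP u0 v0 hu0 (by omega) hc1 (by omega)).elim
    · rcases h03 with h03 | h03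
      · exact (hN v0 u0 (hT.1 _ _ hu0) (by omega) hc1 h02).elim
      · exact Or.inr ⟨u0, v0, hu0, hc1, h02, h03⟩
  rcases hBD with hEβ | hEδ
  · -- Branch I : a β-arc exists; choose one with maximal left end
    obtain ⟨l1, r1, ⟨hl1A, hl1b, hl1c, hr1b⟩, hmax1⟩ :=
      exists_max_left (fun x y => (x, y) ∈ A ∧ pos a b < pos a x ∧ pos a x < pos a c ∧
        pos a y < pos a b) (pos a) hEβ
    have hEδ : ∃ x y, (x, y) ∈ A ∧ pos a c ≤ pos a x ∧ pos a x < pos a d ∧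
        pos a d < pos a y := by
      by_contra hno
      push_neg at hno
      obtain ⟨u, v, huv, g1, g2, g3⟩ := getC l1 d (mk_diag (o := a) (by omega) (by omega)) (by omega)
        (fun hmem => hP l1 d hmem (by omega) hl1c le_rfl)
      rcases g3 with g3 | g3
      · rcases lt_or_ge (pos a u) (pos a c) with hu | hu
        · rcases lt_or_ge (pos a v) (pos a b) with hv | hv
          · exact absurd (hmax1 u v ⟨huv, by omega, hu, hv⟩) (by omega)
          · exact NC r1 l1 v u (hT.1 _ _ hl1A) (hT.1 _ _ huv) (by omega) g3 (by omega)
        · rcases lt_or_ge (pos a v) (pos a b) with hv | hv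
          · exact hN v u (hT.1 _ _ huv) hv hu g2
          · exact NC r1 l1 v u (hT.1 _ _ hl1A) (hT.1 _ _ huv) (by omega) g3 (by omega)
      · rcases lt_or_ge (pos a u) (pos a c) with hu | hu
        · exact hP u v huv (by omega) hu (by omega)
        · exact absurd (hno u v huv hu g2) (by omega)
    obtain ⟨l2, r2, ⟨hl2A, hl2c, hl2d, hr2d⟩, hmax2⟩ :=
      exists_max_right (fun x y => (x, y) ∈ A ∧ pos a c ≤ pos a x ∧ pos a x < pos a d ∧
        pos a d < pos a y) (pos a) hEδ
    have hr2m : pos a r2 < m := pos_lt a r2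
    obtain ⟨u, v, huv, g1, g2, g3⟩ := getC l1 r2 (mk_diag (o := a) (by omega) (by omega)) (by omega)
      (fun hmem => hP l1 r2 hmem (by omega) hl1c (by omega))
    rcases g3 with g3 | g3
    · rcases lt_or_ge (pos a u) (pos a c) with hu | hu
      · rcases lt_or_ge (pos a v) (pos a b) with hv | hv
        · exact absurd (hmax1 u v ⟨huv, by omega, hu, hv⟩) (by omega)
        · exact NC r1 l1 v u (hT.1 _ _ hl1A) (hT.1 _ _ huv) (by omega) g3 (by omega)
      · rcases lt_or_ge (pos a u) (pos a d) with hu2 | hu2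
        · rcases lt_or_ge (pos a v) (pos a b) with hv | hv
          · exact hN v u (hT.1 _ _ huv) hv hu hu2
          · exact NC r1 l1 v u (hT.1 _ _ hl1A) (hT.1 _ _ huv) (by omega) g3 (by omega)
        · rcases lt_or_ge (pos a v) (pos a b) with hv | hv
          · exact NC v u l2 r2 (hT.1 _ _ huv) hl2A (by omega) (by omega) g2
          · exact NC r1 l1 v u (hT.1 _ _ hl1A) (hT.1 _ _ huv) (by omega) g3 (by omega)
    · rcases lt_or_ge (pos a u) (pos a c) with hu | hu
      · exact hP u v huv (by omega) hu (by omega)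
      · rcases lt_or_ge (pos a u) (pos a d) with hu2 | hu2
        · exact absurd (hmax2 u v ⟨huv, hu, hu2, by omega⟩) (by omega)
        · exact NC l2 r2 u v hl2A huv (by omega) g2 g3
  · -- Branch II : a δ-arc exists; choose one with minimal left end
    obtain ⟨l2, r2, ⟨hl2A, hl2c, hl2d, hr2d⟩, hmin2⟩ :=
      exists_min_left (fun x y => (x, y) ∈ A ∧ pos a c ≤ pos a x ∧ pos a x < pos a d ∧
        pos a d < pos a y) (pos a) hEδ
    have hEα : ∃ x y, (x, y) ∈ A ∧ 0 < pos a x ∧ pos a x < pos a b ∧ pos a d ≤ pos a y := by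
      by_contra hno
      push_neg at hno
      obtain ⟨u, v, huv, g1, g2, g3⟩ := getC a l2 (mk_diag' (o := a) (by omega) (by omega)) (by omega)
        (fun hmem => hN a l2 hmem (by omega) hl2c hl2d)
      rw [ha0] at g1 g3
      have g3' : pos a l2 < pos a v := by omega
      rcases lt_or_ge (pos a u) (pos a b) with hu | hu
      · rcases lt_or_ge (pos a v) (pos a d) with hv | hv
        · exact hN u v huv hu (by omega) hv
        · exact absurd (hno u v huv g1 hu) (by omega)
      · rcases lt_or_ge (pos a u) (pos a c) with hu2 | hu2
        · rcases le_or_gt (pos a d) (pos a v) with hv | hv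
          · exact hP u v huv hu hu2 hv
          · exact NC u v l2 r2 huv hl2A (by omega) g3' (by omega)
        · rcases le_or_gt (pos a v) (pos a d) with hv | hv
          · exact NC u v l2 r2 huv hl2A (by omega) g3' (by omega)
          · exact absurd (hmin2 u v ⟨huv, hu2, by omega, hv⟩) (by omega)
    obtain ⟨u1, v1, ⟨hu1A, hu1p, hu1b, hv1d⟩, hmaxα⟩ :=
      exists_max_left (fun x y => (x, y) ∈ A ∧ 0 < pos a x ∧ pos a x < pos a b ∧
        pos a d ≤ pos a y) (pos a) hEα
    have hv1m : pos a v1 < m := pos_lt a v1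
    obtain ⟨u, v, huv, g1, g2, g3⟩ := getC u1 l2 (mk_diag (o := a) hu1p (by omega)) (by omega)
      (fun hmem => hN u1 l2 hmem hu1b hl2c hl2d)
    rcases lt_or_ge (pos a u) (pos a b) with hu | hu
    · rcases g3 with g3 | g3
      · exact NC v u u1 v1 (hT.1 _ _ huv) hu1A g3 (by omega) (by omega)
      · rcases lt_or_ge (pos a v) (pos a d) with hv | hv
        · exact hN u v huv hu (by omega) hv
        · exact absurd (hmaxα u v ⟨huv, by omega, hu, hv⟩) (by omega)
    · rcases lt_or_ge (pos a u) (pos a c) with hu2 | hu2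
      · rcases g3 with g3 | g3
        · exact NC v u u1 v1 (hT.1 _ _ huv) hu1A g3 (by omega) (by omega)
        · rcases lt_or_ge (pos a v) (pos a d) with hv | hv
          · exact NC u v l2 r2 huv hl2A (by omega) g3 (by omega)
          · exact hP u v huv hu hu2 hv
      · rcases g3 with g3 | g3
        · exact hN v u (hT.1 _ _ huv) (by omega) hu2 (by omega)
        · rcases le_or_gt (pos a v) (pos a d) with hv | hv
          · exact NC u v l2 r2 huv hl2A g2 g3 (by omega)
          · exact absurd (hmin2 u v ⟨huv, hu2, by omega, hv⟩) (by omega)
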